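/- Let X be a Banach space, θ ∈ (0,1), and suppose (u_n) ⊆ B_X and (u*_n) ⊆ B_{X*} satisfy u*_n(u_k) = θ for n ≤ k and u*_n(u_k) = 0 for n > k. Then for all finite subsets J = {n_1 < ... < n_k} and J' = {m_1 < ... < m_l} of ℕ with max J < min J', setting v_J = Σ_{n∈J} u_n and v_{J'} = Σ_{m∈J'} u_m, we have (θ/3)(k+l) ≤ ‖v_J − v_{J'}‖ ≤ k+l. -/

import Mathlib

/-- For James sequences and finite sets J, J' with max J < min J',
(θ/3)(|J|+|J'|) ≤ ‖v_J − v_{J'}‖ ≤ |J|+|J'|. -/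
theorem james_difference_norm_bounds
    {X : Type*} [NormedAddCommGroup X] [NormedSpace ℝ X]
    (θ : ℝ) (hθ0 : 0 < θ) (hθ1 : θ < 1)
    (u : ℕ → X) (φ : ℕ → StrongDual ℝ X)
    (hu : ∀ n, ‖u n‖ ≤ 1) (hφ : ∀ n, ‖φ n‖ ≤ 1)
    (h1 : ∀ n k, n ≤ k → φ n (u k) = θ) (h2 : ∀ n k, k < n → φ n (u k) = 0)
    (J J' : Finset ℕ) (hlt : ∀ n ∈ J, ∀ m ∈ J', n < m) :
    (θ / 3) * (J.card + J'.card) ≤ ‖(∑ n ∈ J, u n) - ∑ m ∈ J', u m‖ ∧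
      ‖(∑ n ∈ J, u n) - ∑ m ∈ J', u m‖ ≤ J.card + J'.card := by
  classical
  set v : X := (∑ n ∈ J, u n) - ∑ m ∈ J', u m with hv
  have hbound : ∀ i : ℕ, |φ i v| ≤ ‖v‖ := by
    intro i
    calc |φ i v| = ‖φ i v‖ := rfl
      _ ≤ ‖φ i‖ * ‖v‖ := (φ i).le_opNorm v
      _ ≤ 1 * ‖v‖ := by gcongr; exact hφ i
      _ = ‖v‖ := one_mul _
  -- upper bound
  have hub : ‖v‖ ≤ J.card + J'.card := by
    calc ‖v‖ ≤ ‖∑ n ∈ J, u n‖ + ‖∑ m ∈ J', u m‖ := norm_sub_le _ _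
      _ ≤ (∑ n ∈ J, ‖u n‖) + ∑ m ∈ J', ‖u m‖ :=
          add_le_add (norm_sum_le _ _) (norm_sum_le _ _)
      _ ≤ (∑ _n ∈ J, (1:ℝ)) + ∑ _m ∈ J', (1:ℝ) :=
          add_le_add (Finset.sum_le_sum fun n _ => hu n)
            (Finset.sum_le_sum fun m _ => hu m)
      _ = J.card + J'.card := by simp
  refine ⟨?_, hub⟩
  have key1 : J'.Nonempty → θ * J'.card ≤ ‖v‖ := by
    intro hJ'
    set m₁ := J'.min' hJ'
    have hcalc : φ m₁ v = -(θ * J'.card) := by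
      have hA : φ m₁ (∑ n ∈ J, u n) = 0 := by
        rw [map_sum]
        exact Finset.sum_eq_zero fun n hn => h2 _ _ (hlt n hn m₁ (J'.min'_mem hJ'))
      have hB : φ m₁ (∑ m ∈ J', u m) = θ * J'.card := by
        rw [map_sum]
        rw [Finset.sum_congr rfl fun m hm => h1 m₁ m (J'.min'_le m hm)]
        simp [mul_comm]
      simp [hv, map_sub, hA, hB]
    have := hbound m₁
    rw [hcalc, abs_neg, abs_of_nonneg (by positivity)] at this
    exact this
  have key2 : J.Nonempty → θ * |(J.card : ℝ) - J'.card| ≤ ‖v‖ := by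
    intro hJ
    set n₁ := J.min' hJ
    have hcalc : φ n₁ v = θ * ((J.card : ℝ) - J'.card) := by
      have hA : φ n₁ (∑ n ∈ J, u n) = θ * J.card := by
        rw [map_sum, Finset.sum_congr rfl fun n hn => h1 n₁ n (J.min'_le n hn)]
        simp [mul_comm]
      have hB : φ n₁ (∑ m ∈ J', u m) = θ * J'.card := by
        rw [map_sum, Finset.sum_congr rfl fun m hm =>
          h1 n₁ m (le_of_lt (hlt n₁ (J.min'_mem hJ) m hm))]
        simp [mul_comm]
      simp [hv, map_sub, hA, hB]; ring
    have := hbound n₁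
    rw [hcalc, abs_mul, abs_of_pos hθ0] at this
    exact this
  rcases J.eq_empty_or_nonempty with hJe | hJ
  · rcases J'.eq_empty_or_nonempty with hJ'e | hJ'
    · simp [hJe, hJ'e, hv]
    · have h := key1 hJ'
      have hc : (0:ℝ) ≤ J'.card := by positivity
      simp only [hJe, Finset.card_empty, Nat.cast_zero, zero_add]
      nlinarith
  · rcases J'.eq_empty_or_nonempty with hJ'e | hJ'
    · have h := key2 hJ
      simp only [hJ'e, Finset.card_empty, Nat.cast_zero, sub_zero, Nat.abs_cast] at h
      have hc : (0:ℝ) ≤ J.card := by positivity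
      simp only [hJ'e, Finset.card_empty, Nat.cast_zero, add_zero]
      nlinarith
    · have ha := key1 hJ'
      have hb := key2 hJ
      have hb' : θ * ((J.card : ℝ) - J'.card) ≤ ‖v‖ :=
        le_trans (by nlinarith [le_abs_self ((J.card : ℝ) - J'.card)]) hb
      nlinarith
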